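/- Fix an integer d ≥ 2, an index 0 ≤ i ≤ d, and κ as below with κ'(1) = 1. Then, as L → ∞, L^{−d/2}·M_i(L) converges to η_1^{−d/2}·A_i, where A_i := (2√π / Γ((d+1)/2)) · ∫_{ℝ^d} Π(λ)·𝟙_{O_i}(λ)·f_{1/2}(λ) dλ. (Sparse regime of Theorem 3.2: the Kac–Rice expression grows like L^{d/2}.) -/

import Mathlib

open MeasureTheory Filter Real

/-- `K_d := 2^{d/2} ∏_{j=1}^d Γ(j/2)`. -/
noncomputable def Kd (d : ℕ) : ℝ :=
  2 ^ ((d : ℝ) / 2) * ∏ j ∈ Finset.Icc 1 d, Real.Gamma ((j : ℝ) / 2)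

/-- `Π(λ) := ∏_{j=1}^d |λ_j|`. -/
noncomputable def PiAbs (d : ℕ) (lam : Fin d → ℝ) : ℝ := ∏ j, |lam j|

/-- `Δ(λ) := ∏_{1 ≤ h < k ≤ d} |λ_h − λ_k|`. -/
noncomputable def DeltaV (d : ℕ) (lam : Fin d → ℝ) : ℝ :=
  ∏ h : Fin d, ∏ k : Fin d, if h < k then |lam h - lam k| else 1

/-- The density of the ordered eigenvalues of a GOI(c) matrix. -/
noncomputable def fGOI (d : ℕ) (c : ℝ) (lam : Fin d → ℝ) : ℝ :=
  (Kd d * Real.sqrt (1 + d * c))⁻¹ * DeltaV d lam *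
    Real.exp (-(∑ j, lam j ^ 2) / 2 + c * (∑ j, lam j) ^ 2 / (2 * (1 + d * c))) *
    Set.indicator {x : Fin d → ℝ | Monotone x} (fun _ => 1) lam

/-- `O_i := {λ : λ_i < 0 < λ_{i+1}}` with conventions `λ_0 = −∞`, `λ_{d+1} = +∞`
(one-based indexing; coordinates here are zero-based). -/
def Oi (d i : ℕ) : Set (Fin d → ℝ) :=
  {lam | (∀ j : Fin d, (j : ℕ) + 1 = i → lam j < 0) ∧ (∀ j : Fin d, (j : ℕ) = i → 0 < lam j)}

/-- `∫_{ℝ^d} Π(λ)·𝟙_{O_i}(λ)·f_c(λ) dλ`. -/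
noncomputable def GOIint (d i : ℕ) (c : ℝ) : ℝ :=
  ∫ lam : Fin d → ℝ,
    PiAbs d lam * Set.indicator (Oi d i) (fun _ => 1) lam * fGOI d c lam

-- auxiliary lemmas
lemma Kd_pos (d : ℕ) : 0 < Kd d := by
  apply mul_pos (Real.rpow_pos_of_pos two_pos _)
  exact Finset.prod_pos fun j hj => Real.Gamma_pos_of_pos
    (by have := (Finset.mem_Icc.mp hj).1; positivity)

lemma ind_one_nonneg {α : Type*} (S : Set α) (x : α) :
    0 ≤ S.indicator (fun _ => (1:ℝ)) x :=
  Set.indicator_nonneg (fun _ _ => zero_le_one) x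

lemma ind_one_le_one {α : Type*} (S : Set α) (x : α) :
    S.indicator (fun _ => (1:ℝ)) x ≤ 1 := by
  classical
  rw [Set.indicator_apply]; split_ifs <;> norm_num

lemma PiAbs_nonneg (d : ℕ) (lam : Fin d → ℝ) : 0 ≤ PiAbs d lam :=
  Finset.prod_nonneg fun j _ => abs_nonneg _

lemma DeltaV_nonneg (d : ℕ) (lam : Fin d → ℝ) : 0 ≤ DeltaV d lam :=
  Finset.prod_nonneg fun h _ => Finset.prod_nonneg fun k _ => by
    split_ifs
    · exact abs_nonneg _
    · exact zero_le_one

lemma fGOI_nonneg (d : ℕ) (c : ℝ) (lam : Fin d → ℝ) : 0 ≤ fGOI d c lam := by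
  unfold fGOI
  have h1 : (0:ℝ) ≤ (Kd d * Real.sqrt (1 + d * c))⁻¹ :=
    inv_nonneg.mpr (mul_nonneg (Kd_pos d).le (Real.sqrt_nonneg _))
  exact mul_nonneg (mul_nonneg (mul_nonneg h1 (DeltaV_nonneg d lam)) (Real.exp_pos _).le)
    (ind_one_nonneg _ _)

lemma integrand_nonneg (d i : ℕ) (c : ℝ) (lam : Fin d → ℝ) :
    0 ≤ PiAbs d lam * Set.indicator (Oi d i) (fun _ => 1) lam * fGOI d c lam :=
  mul_nonneg (mul_nonneg (PiAbs_nonneg d lam) (ind_one_nonneg _ _)) (fGOI_nonneg d c lam)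

lemma meas_mono_set (d : ℕ) : MeasurableSet {x : Fin d → ℝ | Monotone x} := by
  have h : {x : Fin d → ℝ | Monotone x}
      = ⋂ (a : Fin d) (b : Fin d) (_ : a ≤ b), {x : Fin d → ℝ | x a ≤ x b} := by
    ext x
    simp only [Set.mem_setOf_eq, Set.mem_iInter]
    exact ⟨fun h a b hab => h hab, fun h a b hab => h a b hab⟩
  rw [h]
  exact MeasurableSet.iInter fun a => MeasurableSet.iInter fun b =>
    MeasurableSet.iInter fun _ =>
      measurableSet_le (measurable_pi_apply a) (measurable_pi_apply b)

lemma meas_Oi (d i : ℕ) : MeasurableSet (Oi d i) := by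
  have h : Oi d i = (⋂ (j : Fin d) (_ : (j : ℕ) + 1 = i), {lam : Fin d → ℝ | lam j < 0}) ∩
      (⋂ (j : Fin d) (_ : (j : ℕ) = i), {lam : Fin d → ℝ | 0 < lam j}) := by
    ext x
    simp only [Oi, Set.mem_setOf_eq, Set.mem_inter_iff, Set.mem_iInter]
  rw [h]
  exact MeasurableSet.inter
    (MeasurableSet.iInter fun j => MeasurableSet.iInter fun _ =>
      measurableSet_lt (measurable_pi_apply j) measurable_const)
    (MeasurableSet.iInter fun j => MeasurableSet.iInter fun _ =>
      measurableSet_lt measurable_const (measurable_pi_apply j))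

lemma meas_integrand (d i : ℕ) (c : ℝ) :
    Measurable (fun lam : Fin d → ℝ =>
      PiAbs d lam * Set.indicator (Oi d i) (fun _ => 1) lam * fGOI d c lam) := by
  have hPi : Measurable (PiAbs d) :=
    Finset.measurable_prod _ fun j _ => (measurable_pi_apply j).abs
  have hD : Measurable (DeltaV d) := by
    apply Finset.measurable_prod _ fun h _ => Finset.measurable_prod _ fun k _ => ?_
    split_ifs
    · exact ((measurable_pi_apply h).sub (measurable_pi_apply k)).abs
    · exact measurable_const
  have harg : Measurable (fun lam : Fin d → ℝ =>
      -(∑ j, lam j ^ 2) / 2 + c * (∑ j, lam j) ^ 2 / (2 * (1 + d * c))) := by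
    apply Measurable.add
    · exact ((Finset.measurable_sum _ fun j _ => (measurable_pi_apply j).pow_const 2).neg).div_const 2
    · exact (((Finset.measurable_sum _ fun j _ => measurable_pi_apply j).pow_const 2).const_mul c).div_const _
  have hf : Measurable (fGOI d c) := by
    unfold fGOI
    exact (((measurable_const.mul hD)).mul (Real.measurable_exp.comp harg)).mul
      (Measurable.indicator measurable_const (meas_mono_set d))
  exact ((hPi.mul (Measurable.indicator measurable_const (meas_Oi d i))).mul hf)

noncomputable def bFn (d : ℕ) (x : ℝ) : ℝ :=
  (1 + x ^ 2) ^ (2 * d + 1) * Real.exp (-((2 * (1 + (d : ℝ)))⁻¹ * x ^ 2))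

lemma bFn_integrable (d : ℕ) : Integrable (bFn d) := by
  set b : ℝ := (2 * (1 + (d : ℝ)))⁻¹ with hbdef
  have hbpos : 0 < b := by positivity
  set m : ℕ := 2 * d + 1 with hmdef
  have hm : 0 < (m : ℝ) := by positivity
  set ε : ℝ := b / (2 * m) with hedef
  have hε : 0 < ε := by positivity
  have key : ∀ x : ℝ, bFn d x ≤ (1 + 1 / ε) ^ m * Real.exp (-(b / 2) * x ^ 2) := by
    intro x
    have h2 : Real.exp (-(ε * x ^ 2)) ≤ 1 := by
      rw [Real.exp_le_one_iff]
      nlinarith [sq_nonneg x]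
    have h3 : x ^ 2 * Real.exp (-(ε * x ^ 2)) ≤ 1 / ε := by
      rw [Real.exp_neg]
      rw [mul_inv_le_iff₀ (Real.exp_pos _)]
      have := Real.add_one_le_exp (ε * x ^ 2)
      rw [div_mul_eq_mul_div, le_div_iff₀ hε]
      nlinarith [Real.exp_pos (ε * x ^ 2)]
    have h1 : (1 + x ^ 2) * Real.exp (-(ε * x ^ 2)) ≤ 1 + 1 / ε := by
      calc (1 + x ^ 2) * Real.exp (-(ε * x ^ 2))
          = Real.exp (-(ε * x ^ 2)) + x ^ 2 * Real.exp (-(ε * x ^ 2)) := by ring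
        _ ≤ 1 + 1 / ε := add_le_add h2 h3
    have hme : (m : ℝ) * ε = b / 2 := by
      rw [hedef]; field_simp
    have hsplit : bFn d x
        = ((1 + x ^ 2) * Real.exp (-(ε * x ^ 2))) ^ m * Real.exp (-(b / 2) * x ^ 2) := by
      rw [bFn, mul_pow, ← Real.exp_nat_mul, mul_assoc, ← Real.exp_add]
      congr 2
      have : (m : ℝ) * -(ε * x ^ 2) = -(b / 2) * x ^ 2 := by
        rw [show (m:ℝ) * -(ε * x ^ 2) = -(((m:ℝ) * ε) * x ^ 2) by ring, hme]; ring
      rw [this]; ring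
    rw [hsplit]
    have hpow : ((1 + x ^ 2) * Real.exp (-(ε * x ^ 2))) ^ m ≤ (1 + 1 / ε) ^ m :=
      pow_le_pow_left₀ (by positivity) h1 m
    exact mul_le_mul_of_nonneg_right hpow (Real.exp_pos _).le
  have hint : Integrable (fun x : ℝ => (1 + 1 / ε) ^ m * Real.exp (-(b / 2) * x ^ 2)) :=
    (integrable_exp_neg_mul_sq (by positivity : (0:ℝ) < b / 2)).const_mul _
  refine hint.mono' ?_ (Filter.Eventually.of_forall fun x => ?_)
  · apply Continuous.aestronglyMeasurable
    unfold bFn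
    fun_prop
  · rw [Real.norm_eq_abs, abs_of_nonneg (by unfold bFn; positivity)]
    exact key x

lemma prod_bFn_eq (d : ℕ) (lam : Fin d → ℝ) :
    ∏ j, bFn d (lam j) = (∏ j, (1 + lam j ^ 2)) ^ (2 * d + 1) *
      Real.exp (-((2 * (1 + (d : ℝ)))⁻¹ * ∑ j, lam j ^ 2)) := by
  unfold bFn
  rw [Finset.prod_mul_distrib, Finset.prod_pow, ← Real.exp_sum]
  congr 1
  rw [Finset.mul_sum, ← Finset.sum_neg_distrib]

lemma abs_le_one_add_sq (x : ℝ) : |x| ≤ 1 + x ^ 2 := by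
  nlinarith [sq_nonneg (|x| - 1), sq_abs x, abs_nonneg x]

lemma PiAbs_DeltaV_le (d : ℕ) (lam : Fin d → ℝ) :
    PiAbs d lam * DeltaV d lam ≤ (∏ j, (1 + lam j ^ 2)) ^ (2 * d + 1) := by
  set P : ℝ := ∏ j, (1 + lam j ^ 2) with hP
  have hfac : ∀ j : Fin d, (1:ℝ) ≤ 1 + lam j ^ 2 := fun j => by nlinarith [sq_nonneg (lam j)]
  have hP1 : (1:ℝ) ≤ P := by
    rw [hP]
    calc (1:ℝ) = ∏ _j : Fin d, (1:ℝ) := by simp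
      _ ≤ ∏ j, (1 + lam j ^ 2) :=
        Finset.prod_le_prod (fun _ _ => zero_le_one) (fun j _ => hfac j)
  have hP0 : (0:ℝ) ≤ P := zero_le_one.trans hP1
  have hB : PiAbs d lam ≤ P :=
    Finset.prod_le_prod (fun j _ => abs_nonneg _) (fun j _ => abs_le_one_add_sq (lam j))
  have hC : DeltaV d lam ≤ P ^ (2 * d) := by
    have step1 : DeltaV d lam ≤ ∏ h : Fin d, ∏ k : Fin d, ((1 + lam h ^ 2) * (1 + lam k ^ 2)) := by
      apply Finset.prod_le_prod
      · intro h _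
        exact Finset.prod_nonneg fun k _ => by split_ifs; exacts [abs_nonneg _, zero_le_one]
      · intro h _
        apply Finset.prod_le_prod
        · intro k _; split_ifs; exacts [abs_nonneg _, zero_le_one]
        · intro k _
          split_ifs
          · have h1 : |lam h - lam k| ≤ |lam h| + |lam k| := abs_sub _ _
            nlinarith [sq_nonneg (|lam h| - 1), sq_nonneg (|lam k| - 1), sq_abs (lam h),
              sq_abs (lam k), sq_nonneg (lam h), sq_nonneg (lam k),
              mul_nonneg (sq_nonneg (lam h)) (sq_nonneg (lam k)),
              abs_nonneg (lam h), abs_nonneg (lam k)]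
          · nlinarith [hfac h, hfac k]
    have step2 : ∏ h : Fin d, ∏ k : Fin d, ((1 + lam h ^ 2) * (1 + lam k ^ 2))
        = P ^ d * P ^ d := by
      have inner : ∀ h : Fin d, ∏ k : Fin d, ((1 + lam h ^ 2) * (1 + lam k ^ 2))
          = (1 + lam h ^ 2) ^ d * P := by
        intro h
        rw [Finset.prod_mul_distrib, Finset.prod_const, Finset.card_univ, Fintype.card_fin]
      rw [Finset.prod_congr rfl fun h _ => inner h, Finset.prod_mul_distrib,
        Finset.prod_pow, Finset.prod_const, Finset.card_univ, Fintype.card_fin]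
    calc DeltaV d lam ≤ P ^ d * P ^ d := step1.trans_eq step2
      _ = P ^ (2 * d) := by rw [← pow_add]; ring_nf
  calc PiAbs d lam * DeltaV d lam ≤ P * P ^ (2 * d) :=
        mul_le_mul hB hC (DeltaV_nonneg d lam) hP0
    _ = P ^ (2 * d + 1) := by rw [pow_succ]; ring

lemma exp_arg_le (d : ℕ) {c : ℝ} (hcl : 1/2 ≤ c) (hcu : c ≤ 1) (lam : Fin d → ℝ) :
    -(∑ j, lam j ^ 2) / 2 + c * (∑ j, lam j) ^ 2 / (2 * (1 + d * c))
      ≤ -((2 * (1 + (d : ℝ)))⁻¹ * ∑ j, lam j ^ 2) := by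
  set S2 : ℝ := ∑ j, lam j ^ 2 with hS2def
  set S1 : ℝ := ∑ j, lam j with hS1def
  have hd0 : (0:ℝ) ≤ (d:ℝ) := Nat.cast_nonneg d
  have h1dc : (0:ℝ) < 1 + d * c := by nlinarith
  have hS2 : 0 ≤ S2 := Finset.sum_nonneg fun j _ => sq_nonneg _
  have hCS : S1 ^ 2 ≤ (d:ℝ) * S2 := by
    rw [hS1def, hS2def]
    have := sq_sum_le_card_mul_sum_sq (s := (Finset.univ : Finset (Fin d))) (f := lam)
    simpa using this
  have hc0 : (0:ℝ) ≤ c := by linarith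
  have h1 : c * S1 ^ 2 / (2 * (1 + d * c)) ≤ c * ((d:ℝ) * S2) / (2 * (1 + d * c)) := by
    apply div_le_div_of_nonneg_right ?_ (by positivity)
    exact mul_le_mul_of_nonneg_left hCS hc0
  have h2 : -S2 / 2 + c * ((d:ℝ) * S2) / (2 * (1 + d * c)) = -(S2 / (2 * (1 + d * c))) := by
    field_simp
    ring
  have h3 : S2 / (2 * (1 + (d:ℝ))) ≤ S2 / (2 * (1 + (d:ℝ) * c)) := by
    apply div_le_div_of_nonneg_left hS2 (by positivity)
    nlinarith
  have h4 : -((2 * (1 + (d:ℝ)))⁻¹ * S2) = -(S2 / (2 * (1 + (d:ℝ)))) := by ring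
  rw [h4]
  linarith

lemma fGOI_bound (d i : ℕ) {c : ℝ} (hcl : 1/2 ≤ c) (hcu : c ≤ 1) (lam : Fin d → ℝ) :
    PiAbs d lam * Set.indicator (Oi d i) (fun _ => 1) lam * fGOI d c lam ≤
      (Kd d * Real.sqrt (1 + d * (1/2)))⁻¹ * ∏ j, bFn d (lam j) := by
  have hd0 : (0:ℝ) ≤ (d:ℝ) := Nat.cast_nonneg d
  have hKd := Kd_pos d
  have hpre0 : (0:ℝ) < Kd d * Real.sqrt (1 + d * (1/2)) :=
    mul_pos hKd (Real.sqrt_pos.mpr (by nlinarith))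
  -- prefactor bound
  have hpre : (Kd d * Real.sqrt (1 + d * c))⁻¹ ≤ (Kd d * Real.sqrt (1 + d * (1/2)))⁻¹ := by
    apply inv_anti₀ hpre0
    apply mul_le_mul_of_nonneg_left _ hKd.le
    exact Real.sqrt_le_sqrt (by nlinarith)
  -- exp bound
  have hexp : Real.exp (-(∑ j, lam j ^ 2) / 2 + c * (∑ j, lam j) ^ 2 / (2 * (1 + d * c)))
      ≤ Real.exp (-((2 * (1 + (d : ℝ)))⁻¹ * ∑ j, lam j ^ 2)) :=
    Real.exp_le_exp.mpr (exp_arg_le d hcl hcu lam)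
  set E : ℝ := Real.exp (-((2 * (1 + (d : ℝ)))⁻¹ * ∑ j, lam j ^ 2)) with hE
  set P : ℝ := ∏ j, (1 + lam j ^ 2) with hP
  have hfG : fGOI d c lam ≤ (Kd d * Real.sqrt (1 + d * (1/2)))⁻¹ * DeltaV d lam * E := by
    unfold fGOI
    have step1 : (Kd d * Real.sqrt (1 + d * c))⁻¹ * DeltaV d lam
        ≤ (Kd d * Real.sqrt (1 + d * (1/2)))⁻¹ * DeltaV d lam :=
      mul_le_mul_of_nonneg_right hpre (DeltaV_nonneg d lam)
    calc (Kd d * Real.sqrt (1 + d * c))⁻¹ * DeltaV d lam *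
          Real.exp (-(∑ j, lam j ^ 2) / 2 + c * (∑ j, lam j) ^ 2 / (2 * (1 + d * c))) *
          Set.indicator {x : Fin d → ℝ | Monotone x} (fun _ => 1) lam
        ≤ (Kd d * Real.sqrt (1 + d * c))⁻¹ * DeltaV d lam *
          Real.exp (-(∑ j, lam j ^ 2) / 2 + c * (∑ j, lam j) ^ 2 / (2 * (1 + d * c))) * 1 := by
          apply mul_le_mul_of_nonneg_left (ind_one_le_one _ _)
          exact mul_nonneg (mul_nonneg (inv_nonneg.mpr (mul_nonneg hKd.le (Real.sqrt_nonneg _)))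
            (DeltaV_nonneg d lam)) (Real.exp_pos _).le
      _ = (Kd d * Real.sqrt (1 + d * c))⁻¹ * DeltaV d lam *
          Real.exp (-(∑ j, lam j ^ 2) / 2 + c * (∑ j, lam j) ^ 2 / (2 * (1 + d * c))) := by
          ring
      _ ≤ (Kd d * Real.sqrt (1 + d * (1/2)))⁻¹ * DeltaV d lam * E := by
          apply mul_le_mul step1 hexp (Real.exp_pos _).le
          exact mul_nonneg (inv_nonneg.mpr hpre0.le) (DeltaV_nonneg d lam)
  have hE0 : 0 ≤ E := (Real.exp_pos _).le
  calc PiAbs d lam * Set.indicator (Oi d i) (fun _ => 1) lam * fGOI d c lam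
      ≤ PiAbs d lam * 1 * fGOI d c lam := by
        apply mul_le_mul_of_nonneg_right _ (fGOI_nonneg d c lam)
        exact mul_le_mul_of_nonneg_left (ind_one_le_one _ _) (PiAbs_nonneg d lam)
    _ = PiAbs d lam * fGOI d c lam := by ring
    _ ≤ PiAbs d lam * ((Kd d * Real.sqrt (1 + d * (1/2)))⁻¹ * DeltaV d lam * E) :=
        mul_le_mul_of_nonneg_left hfG (PiAbs_nonneg d lam)
    _ = (Kd d * Real.sqrt (1 + d * (1/2)))⁻¹ * ((PiAbs d lam * DeltaV d lam) * E) := by ring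
    _ ≤ (Kd d * Real.sqrt (1 + d * (1/2)))⁻¹ * (P ^ (2 * d + 1) * E) := by
        apply mul_le_mul_of_nonneg_left _ (inv_nonneg.mpr hpre0.le)
        exact mul_le_mul_of_nonneg_right (PiAbs_DeltaV_le d lam) hE0
    _ = (Kd d * Real.sqrt (1 + d * (1/2)))⁻¹ * ∏ j, bFn d (lam j) := by
        rw [prod_bFn_eq d lam]

lemma fGOI_contAt (d : ℕ) (lam : Fin d → ℝ) :
    ContinuousAt (fun t : ℝ => fGOI d t lam) (1/2) := by
  have hd0 : (0:ℝ) ≤ (d:ℝ) := Nat.cast_nonneg d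
  have hKd := Kd_pos d
  have hne : Kd d * Real.sqrt (1 + d * (1/2)) ≠ 0 :=
    (mul_pos hKd (Real.sqrt_pos.mpr (by nlinarith))).ne'
  have h1 : ContinuousAt (fun t : ℝ => (Kd d * Real.sqrt (1 + d * t))⁻¹) (1/2) := by
    exact ContinuousAt.inv₀ ((continuous_const.mul (Real.continuous_sqrt.comp
      (continuous_const.add (continuous_const.mul continuous_id)))).continuousAt) hne
  have hden : (2 : ℝ) * (1 + d * (1/2)) ≠ 0 := by positivity
  have h2 : ContinuousAt (fun t : ℝ =>
      Real.exp (-(∑ j, lam j ^ 2) / 2 + t * (∑ j, lam j) ^ 2 / (2 * (1 + d * t)))) (1/2) := by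
    apply Real.continuous_exp.continuousAt.comp
    apply ContinuousAt.add continuousAt_const
    apply ContinuousAt.div
    · exact (continuous_id.mul continuous_const).continuousAt
    · exact (continuous_const.mul (continuous_const.add
        (continuous_const.mul continuous_id))).continuousAt
    · exact hden
  unfold fGOI
  exact ((h1.mul continuousAt_const).mul h2).mul continuousAt_const

lemma GOIint_tendsto (d i : ℕ) {c : ℕ → ℝ}
    (hc : Tendsto c atTop (nhds (1/2))) (hcl : ∀ L, 1/2 ≤ c L)
    (hcu : ∀ᶠ L in atTop, c L ≤ 1) :
    Tendsto (fun L => GOIint d i (c L)) atTop (nhds (GOIint d i (1/2))) := by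
  unfold GOIint
  apply tendsto_integral_filter_of_dominated_convergence
    (bound := fun lam : Fin d → ℝ => (Kd d * Real.sqrt (1 + d * (1/2)))⁻¹ * ∏ j, bFn d (lam j))
  · exact Filter.Eventually.of_forall fun L => (meas_integrand d i _).aestronglyMeasurable
  · filter_upwards [hcu] with L hL
    apply Filter.Eventually.of_forall
    intro lam
    rw [Real.norm_eq_abs, abs_of_nonneg (integrand_nonneg d i _ lam)]
    exact fGOI_bound d i (hcl L) hL lam
  · exact (Integrable.fintype_prod (fun _ => bFn_integrable d)).const_mul _
  · apply Filter.Eventually.of_forall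
    intro lam
    have hcont : ContinuousAt (fun t : ℝ =>
        PiAbs d lam * Set.indicator (Oi d i) (fun _ => 1) lam * fGOI d t lam) (1/2) :=
      continuousAt_const.mul (fGOI_contAt d lam)
    exact hcont.tendsto.comp hc

section iter
variable {κ : ℝ → ℝ}

lemma iter_contDiff (hs : ContDiff ℝ 2 κ) : ∀ L, ContDiff ℝ 2 (κ^[L])
  | 0 => contDiff_id
  | (L+1) => by
    rw [Function.iterate_succ']
    exact hs.comp (iter_contDiff hs L)

lemma iter_fix (hfix : κ 1 = 1) : ∀ L, κ^[L] 1 = 1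
  | 0 => rfl
  | (L+1) => by
    rw [Function.iterate_succ', Function.comp_apply, iter_fix hfix L, hfix]

lemma iter_d1 (hs : ContDiff ℝ 2 κ) (hfix : κ 1 = 1) (h1 : deriv κ 1 = 1) :
    ∀ L, deriv (κ^[L]) 1 = 1
  | 0 => by simp
  | (L+1) => by
    have hκd : Differentiable ℝ κ := hs.differentiable (by norm_num)
    have hgd : Differentiable ℝ (κ^[L]) := (iter_contDiff hs L).differentiable (by norm_num)
    rw [Function.iterate_succ',
      deriv_comp 1 (hκd.differentiableAt) (hgd.differentiableAt),
      iter_fix hfix L, h1, iter_d1 hs hfix h1 L, mul_one]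

lemma iter_d2 (hs : ContDiff ℝ 2 κ) (hfix : κ 1 = 1) (h1 : deriv κ 1 = 1) :
    ∀ L, deriv (deriv (κ^[L])) 1 = L * deriv (deriv κ) 1
  | 0 => by
    simp [Function.iterate_zero, deriv_id']
  | (L+1) => by
    have hκd : Differentiable ℝ κ := hs.differentiable (by norm_num)
    have hg := iter_contDiff hs L
    have hgd : Differentiable ℝ (κ^[L]) := hg.differentiable (by norm_num)
    have hκ' : ContDiff ℝ 1 (deriv κ) := by
      have h2 : ContDiff ℝ ((1:ℕ)+1) κ := by exact_mod_cast hs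
      exact ((contDiff_succ_iff_deriv).mp h2).2.2
    have hg' : ContDiff ℝ 1 (deriv (κ^[L])) := by
      have h2 : ContDiff ℝ ((1:ℕ)+1) (κ^[L]) := by exact_mod_cast hg
      exact ((contDiff_succ_iff_deriv).mp h2).2.2
    have hκ'd : Differentiable ℝ (deriv κ) := hκ'.differentiable (by norm_num)
    have hg'd : Differentiable ℝ (deriv (κ^[L])) := hg'.differentiable (by norm_num)
    have hcomp : deriv (κ^[L+1]) = fun x => deriv κ (κ^[L] x) * deriv (κ^[L]) x := by
      funext x
      rw [Function.iterate_succ']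
      exact deriv_comp x (hκd.differentiableAt) (hgd.differentiableAt)
    rw [hcomp]
    have hda : DifferentiableAt ℝ (fun x => deriv κ (κ^[L] x)) 1 :=
      (hκ'd.differentiableAt).comp 1 (hgd.differentiableAt)
    rw [deriv_fun_mul hda (hg'd.differentiableAt)]
    have houter : deriv (fun x => deriv κ (κ^[L] x)) 1
        = deriv (deriv κ) (κ^[L] 1) * deriv (κ^[L]) 1 :=
      deriv_comp 1 (hκ'd.differentiableAt) (hgd.differentiableAt)
    rw [houter, iter_fix hfix L, iter_d1 hs hfix h1 L, h1, iter_d2 hs hfix h1 L]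
    push_cast
    ring

end iter

/-- `η_L := κ_L'(1)/κ_L''(1)` where `κ_L` is the `L`-fold iterate of `κ`. -/
noncomputable def etaL (κ : ℝ → ℝ) (L : ℕ) : ℝ :=
  deriv (κ^[L]) 1 / deriv (deriv (κ^[L])) 1

/-- The Kac–Rice expression for the expected number of critical points of index `i`
of the depth-`L` limiting field on `S^d`. -/
noncomputable def Mcrit (d i : ℕ) (κ : ℝ → ℝ) (L : ℕ) : ℝ :=
  2 * Real.sqrt π / Real.Gamma (((d : ℝ) + 1) / 2) * etaL κ L ^ (-(d : ℝ) / 2) *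
    GOIint d i ((1 + etaL κ L) / 2)

/-- Sparse regime of Theorem 3.2: if `κ'(1) = 1` then `L^{−d/2}·M_i(L)` converges to
`η_1^{−d/2}·A_i`, where `A_i = (2√π/Γ((d+1)/2))·∫ Π·𝟙_{O_i}·f_{1/2}`. -/
theorem statement1 (d i : ℕ) (hd : 2 ≤ d) (hi : i ≤ d) (κ : ℝ → ℝ)
    (hsmooth : ContDiff ℝ 2 κ) (hfix : κ 1 = 1)
    (hpos1 : 0 < deriv κ 1) (hpos2 : 0 < deriv (deriv κ) 1)
    (hsparse : deriv κ 1 = 1) :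
    Tendsto (fun L : ℕ => (L : ℝ) ^ (-(d : ℝ) / 2) * Mcrit d i κ L) atTop
      (nhds ((deriv κ 1 / deriv (deriv κ) 1) ^ (-(d : ℝ) / 2) *
        (2 * Real.sqrt π / Real.Gamma (((d : ℝ) + 1) / 2) * GOIint d i (1 / 2)))) := by
  set c₂ : ℝ := deriv (deriv κ) 1 with hc2
  set C : ℝ := 2 * Real.sqrt π / Real.Gamma (((d : ℝ) + 1) / 2) with hCdef
  have hη : ∀ L : ℕ, etaL κ L = ((L : ℝ) * c₂)⁻¹ := by
    intro L
    rw [etaL, iter_d1 hsmooth hfix hsparse L, iter_d2 hsmooth hfix hsparse L, one_div, hc2]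
  have he0 : ∀ L : ℕ, 0 ≤ ((L : ℝ) * c₂)⁻¹ := fun L =>
    inv_nonneg.mpr (mul_nonneg (Nat.cast_nonneg L) hpos2.le)
  have heT : Tendsto (fun L : ℕ => ((L : ℝ) * c₂)⁻¹) atTop (nhds 0) :=
    Tendsto.inv_tendsto_atTop (Tendsto.atTop_mul_const hpos2 tendsto_natCast_atTop_atTop)
  have hcT : Tendsto (fun L : ℕ => (1 + ((L : ℝ) * c₂)⁻¹) / 2) atTop (nhds (1/2)) := by
    have h := ((tendsto_const_nhds (x := (1:ℝ))).add heT).div_const (2:ℝ)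
    have he : ((1:ℝ) + 0) / 2 = 1/2 := by norm_num
    rw [he] at h
    exact h
  have hcl : ∀ L : ℕ, 1/2 ≤ (1 + ((L : ℝ) * c₂)⁻¹) / 2 := fun L => by
    have := he0 L; linarith
  have hcu : ∀ᶠ L : ℕ in atTop, (1 + ((L : ℝ) * c₂)⁻¹) / 2 ≤ 1 :=
    hcT.eventually (eventually_le_nhds (by norm_num))
  have hmain := GOIint_tendsto d i hcT hcl hcu
  have htarget : Tendsto (fun L : ℕ =>
      (c₂⁻¹) ^ (-(d : ℝ)/2) * (C * GOIint d i ((1 + ((L : ℝ) * c₂)⁻¹) / 2))) atTop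
      (nhds ((c₂⁻¹) ^ (-(d : ℝ)/2) * (C * GOIint d i (1/2)))) :=
    ((hmain.const_mul C).const_mul _)
  have hval : (deriv κ 1 / deriv (deriv κ) 1) = c₂⁻¹ := by rw [hsparse, hc2, one_div]
  rw [hval]
  apply Tendsto.congr' _ htarget
  filter_upwards [eventually_ge_atTop 1] with L hL
  have hL1 : (1:ℝ) ≤ (L:ℝ) := by exact_mod_cast hL
  have hL0 : (0:ℝ) < (L:ℝ) := lt_of_lt_of_le zero_lt_one hL1
  have hmul : (L:ℝ) * ((L:ℝ) * c₂)⁻¹ = c₂⁻¹ := by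
    field_simp
  have hkey : ((L:ℝ)) ^ (-(d : ℝ)/2) * (((L:ℝ) * c₂)⁻¹) ^ (-(d : ℝ)/2)
      = (c₂⁻¹) ^ (-(d : ℝ)/2) := by
    rw [← Real.mul_rpow hL0.le (he0 L), hmul]
  rw [Mcrit, hη L, ← hCdef]
  rw [← hkey]
  ring
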